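/- Let m be a nonnegative integer. Suppose that for each integer k with |k| ≤ m and k ≡ m (mod 2) we are given an entire function φ_k : ℂ → ℂ, and that these satisfy φ_k(λ) = φ_{−k}(−λ) for all such k and all λ ∈ ℂ, and φ_k(l) = φ_l(k) for all integers k, l with |k|, |l| ≤ m and k ≡ l ≡ m (mod 2). Then there exist unique entire functions h₀, h₁, …, h_m : ℂ → ℂ such that φ_k(λ) = Σ_{l=0}^{m} h_l(λ² + k²) · (kλ)^l for all integers k with |k| ≤ m, k ≡ m (mod 2), and all λ ∈ ℂ. (In other words, the algebra ₘA_m is a free Hol(ℂ)-module with the m+1 generators (kλ)^l, l = 0, …, m.) -/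

import Mathlib

open Complex Finset

lemma dslope_entire {f : ℂ → ℂ} (hf : Differentiable ℂ f) (c : ℂ) :
    Differentiable ℂ (dslope f c) := by
  rw [← differentiableOn_univ]
  exact (Complex.differentiableOn_dslope (Filter.univ_mem)).mpr hf.differentiableOn

lemma even_rep {f : ℂ → ℂ} (hf : Differentiable ℂ f) (he : ∀ z, f (-z) = f z) :
    ∃ g : ℂ → ℂ, Differentiable ℂ g ∧ ∀ z, f z = g (z ^ 2) := by
  classical
  set r : ℂ → ℂ := fun w => w ^ ((2 : ℂ)⁻¹) with hr
  have hrsq : ∀ w : ℂ, (r w) ^ 2 = w := by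
    intro w
    have h := Complex.cpow_nat_inv_pow w (two_ne_zero)
    simpa [hr] using h
  set g : ℂ → ℂ := fun w => if w ∈ Complex.slitPlane then f (r w) else f (Complex.I * r (-w))
    with hgdef
  have hgval : ∀ w : ℂ, ∃ s : ℂ, s ^ 2 = w ∧ g w = f s := by
    intro w
    by_cases h : w ∈ Complex.slitPlane
    · exact ⟨r w, hrsq w, by simp [hgdef, h]⟩
    · refine ⟨Complex.I * r (-w), ?_, by simp [hgdef, h]⟩
      rw [mul_pow, Complex.I_sq, hrsq]; ring
  have hfeq : ∀ s t : ℂ, s ^ 2 = t ^ 2 → f s = f t := by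
    intro s t hst
    have h : (s - t) * (s + t) = 0 := by linear_combination hst
    rcases mul_eq_zero.1 h with h' | h'
    · rw [sub_eq_zero] at h'; rw [h']
    · have hs : s = -t := by linear_combination h'
      rw [hs, he]
  have hmain : ∀ z, f z = g (z ^ 2) := by
    intro z
    obtain ⟨s, hs, hgw⟩ := hgval (z ^ 2)
    rw [hgw]; exact (hfeq s z hs).symm
  have hg0 : g 0 = f 0 := by
    have h0 : (0 : ℂ) ∉ Complex.slitPlane := by simp [Complex.mem_slitPlane_iff]
    simp [hgdef, h0, hr, Complex.zero_cpow (by norm_num : ((2:ℂ)⁻¹) ≠ 0)]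
  refine ⟨g, ?_, hmain⟩
  rw [← differentiableOn_univ]
  rw [← Complex.differentiableOn_compl_singleton_and_continuousAt_iff (c := 0) Filter.univ_mem]
  constructor
  · -- differentiable away from 0
    intro w₀ hw₀
    have hw0 : w₀ ≠ 0 := by simpa using hw₀.2
    apply DifferentiableAt.differentiableWithinAt
    by_cases h : w₀ ∈ Complex.slitPlane
    · have hev : g =ᶠ[nhds w₀] fun w => f (r w) := by
        filter_upwards [Complex.isOpen_slitPlane.mem_nhds h] with w hw
        simp [hgdef, hw]
      have hd : DifferentiableAt ℂ (fun w => f (r w)) w₀ := by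
        exact (hf _).comp w₀ ((differentiableAt_id.cpow (differentiableAt_const _) h))
      exact hd.congr_of_eventuallyEq hev
    · have hneg : -w₀ ∈ Complex.slitPlane := by
        rw [Complex.mem_slitPlane_iff] at h ⊢
        push_neg at h
        simp only [Complex.neg_re, Complex.neg_im, neg_ne_zero]
        rcases h with ⟨h1, h2⟩
        left
        rcases lt_or_eq_of_le h1 with h3 | h3
        · linarith
        · exfalso; exact hw0 (Complex.ext (by simpa using h3.symm ▸ rfl) (by simpa using h2))
      have hgb : ∀ w : ℂ, w ≠ 0 → g w = f (Complex.I * r (-w)) := by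
        intro w hw
        by_cases hsp : w ∈ Complex.slitPlane
        · simp only [hgdef, if_pos hsp]
          apply hfeq
          rw [mul_pow, Complex.I_sq, hrsq, hrsq]; ring
        · simp [hgdef, hsp]
      have hev : g =ᶠ[nhds w₀] fun w => f (Complex.I * r (-w)) := by
        filter_upwards [isOpen_compl_singleton.mem_nhds (by simpa using hw0)] with w hw
        exact hgb w (by simpa using hw)
      have hd : DifferentiableAt ℂ (fun w => f (Complex.I * r (-w))) w₀ := by
        apply (hf _).comp
        apply DifferentiableAt.mul (differentiableAt_const _)
        exact (differentiableAt_id.neg).cpow (differentiableAt_const _) hneg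
      exact hd.congr_of_eventuallyEq hev
  · -- continuity at 0
    rw [Metric.continuousAt_iff]
    intro ε hε
    have hfc : ContinuousAt f 0 := (hf 0).continuousAt
    rw [Metric.continuousAt_iff] at hfc
    obtain ⟨δ₁, hδ₁, hδ⟩ := hfc ε hε
    refine ⟨δ₁ ^ 2, by positivity, ?_⟩
    intro w hw
    obtain ⟨s, hs, hgw⟩ := hgval w
    rw [hgw, hg0]
    apply hδ
    have habs : ‖s‖ ^ 2 = ‖w‖ := by
      rw [← norm_pow, hs]
    have : ‖s‖ ^ 2 < δ₁ ^ 2 := by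
      rw [habs]
      simpa [Complex.dist_eq] using hw
    have hlt : ‖s‖ < δ₁ := lt_of_pow_lt_pow_left₀ 2 (le_of_lt hδ₁) this
    simpa [Complex.dist_eq] using hlt

lemma odd_rep {f : ℂ → ℂ} (hf : Differentiable ℂ f) (ho : ∀ z, f (-z) = - f z) :
    ∃ g : ℂ → ℂ, Differentiable ℂ g ∧ ∀ z, f z = z * g (z ^ 2) := by
  have h0 : f 0 = 0 := by
    have h := ho 0
    simp only [neg_zero] at h
    have h2 : (2:ℂ) * f 0 = 0 := by linear_combination h
    exact (mul_eq_zero.mp h2).resolve_left two_ne_zero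
  have hqd : Differentiable ℂ (dslope f 0) := dslope_entire hf 0
  have hfz : ∀ z, f z = z * dslope f 0 z := by
    intro z
    by_cases hz : z = 0
    · simp [hz, h0]
    · rw [dslope_of_ne _ hz, slope_def_field]
      field_simp [h0]
      simp only [h0, sub_zero]; ring
  have hqe : ∀ z, dslope f 0 (-z) = dslope f 0 z := by
    intro z
    by_cases hz : z = 0
    · simp [hz]
    · have h1 := hfz z
      have h2 := hfz (-z)
      rw [ho z, h1] at h2
      have h3 : z * dslope f 0 (-z) = z * dslope f 0 z := by linear_combination h2
      exact mul_left_cancel₀ hz h3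
  obtain ⟨g, hg, hge⟩ := even_rep hqd hqe
  refine ⟨g, hg, fun z => by rw [hfz z, hge]⟩
lemma alg_id (N : ℕ) (G : ℂ) (K : ℕ → ℂ) (hKN : K N = 0) (x y : ℂ) :
    ∑ r ∈ range (N + 1), ((if r = 0 then G else K (r - 1)) - y * K r) * x ^ r
      = G + (x - y) * ∑ j ∈ range N, K j * x ^ j := by
  have h1 : ∑ r ∈ range (N + 1), ((if r = 0 then G else K (r - 1)) - y * K r) * x ^ r
      = (∑ r ∈ range (N + 1), (if r = 0 then G else K (r - 1)) * x ^ r)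
        - y * ∑ r ∈ range (N + 1), K r * x ^ r := by
    rw [Finset.mul_sum, ← Finset.sum_sub_distrib]
    apply Finset.sum_congr rfl
    intro r _
    ring
  rw [h1, Finset.sum_range_succ' (fun r => (if r = 0 then G else K (r - 1)) * x ^ r) N]
  rw [Finset.sum_range_succ (fun r => K r * x ^ r) N, hKN]
  simp only [Nat.succ_ne_zero, if_false, Nat.add_sub_cancel, if_pos rfl, pow_zero, mul_one,
    zero_mul, add_zero]
  rw [sub_mul, Finset.mul_sum, Finset.mul_sum]
  have h2 : ∀ j ∈ range N, K j * x ^ (j + 1) = x * (K j * x ^ j) := by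
    intro j _; ring
  rw [Finset.sum_congr rfl h2]
  simp only [if_true]
  ring

/-- Key lemma: Newton-type interpolation over the ring of entire functions. -/
lemma key (N : ℕ) : ∀ (a : ℕ → ℂ) (g : ℕ → ℂ → ℂ),
    (∀ i, Differentiable ℂ (g i)) →
    (∀ i, i < N → ∀ j, j < N → i ≠ j → a i ≠ a j) →
    (∀ i, i < N → ∀ j, j < N → g i (a j) = g j (a i)) →
    ∃ H : ℕ → ℂ → ℂ, (∀ j, Differentiable ℂ (H j)) ∧
      ∀ i, i < N → ∀ u : ℂ, g i u = ∑ j ∈ range N, H j (u + a i) * (a i * u) ^ j := by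
  induction N with
  | zero => exact fun a g _ _ _ => ⟨fun _ => (fun _ => 0), fun _ => differentiable_const 0,
      fun i hi => absurd hi (Nat.not_lt_zero i)⟩
  | succ N ih =>
    intro a g hg hinj hsym
    set c := a N with hc
    have hac : ∀ i, i < N → a i - c ≠ 0 := by
      intro i hi
      exact sub_ne_zero.mpr (hinj i (Nat.lt_succ_of_lt hi) N (Nat.lt_succ_self N) (Nat.ne_of_lt hi))
    set F : ℕ → ℂ → ℂ := fun i u => g i u - g N (u + a i - c) with hF
    have hFd : ∀ i, Differentiable ℂ (F i) := by
      intro i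
      exact (hg i).sub ((hg N).comp (by fun_prop))
    have hFc : ∀ i, i < N → F i c = 0 := by
      intro i hi
      simp only [hF]
      have h1 : c + a i - c = a i := by ring
      rw [h1, hsym i (Nat.lt_succ_of_lt hi) N (Nat.lt_succ_self N), sub_self]
    set f : ℕ → ℂ → ℂ := fun i u => (a i - c)⁻¹ * dslope (F i) c u with hf
    have hfd : ∀ i, Differentiable ℂ (f i) := by
      intro i
      exact (dslope_entire (hFd i) c).const_mul _
    have hfeq : ∀ i, i < N → ∀ u, (a i - c) * (u - c) * f i u = F i u := by
      intro i hi u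
      by_cases hu : u = c
      · simp [hu, hFc i hi]
      · simp only [hf]
        rw [dslope_of_ne _ hu, slope_def_field, hFc i hi]
        field_simp [hac i hi, sub_ne_zero.mpr hu]
        ring
    have hfsym : ∀ i, i < N → ∀ j, j < N → f i (a j) = f j (a i) := by
      intro i hi j hj
      by_cases hij : i = j
      · rw [hij]
      · have hji : a j ≠ c := sub_ne_zero.mp (hac j hj)
        have hii : a i ≠ c := sub_ne_zero.mp (hac i hi)
        have e1 := hfeq i hi (a j)
        have e2 := hfeq j hj (a i)
        have hFsym : F i (a j) = F j (a i) := by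
          simp only [hF]
          rw [hsym i (Nat.lt_succ_of_lt hi) j (Nat.lt_succ_of_lt hj)]
          have harg : a j + a i - c = a i + a j - c := by ring
          rw [harg]
        rw [hFsym] at e1
        have e3 : (a i - c) * ((a j - c) * f i (a j)) = (a i - c) * ((a j - c) * f j (a i)) := by
          linear_combination e1 - e2
        exact mul_left_cancel₀ (hac j hj) (mul_left_cancel₀ (hac i hi) e3)
    obtain ⟨K, hKd, hKeq⟩ := ih a f hfd
      (fun i hi j hj hij => hinj i (Nat.lt_succ_of_lt hi) j (Nat.lt_succ_of_lt hj) hij)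
      hfsym
    classical
    set K' : ℕ → ℂ → ℂ := fun j => if j < N then K j else (fun _ => 0) with hK'
    have hK'd : ∀ j, Differentiable ℂ (K' j) := by
      intro j
      simp only [hK']
      split
      · exact hKd j
      · exact differentiable_const 0
    have hK'N : ∀ v : ℂ, K' N v = 0 := by intro v; simp [hK']
    set H : ℕ → ℂ → ℂ := fun r v =>
      (if r = 0 then g N (v - c) else K' (r - 1) v) - c * (v - c) * K' r v with hH
    have hHd : ∀ r, Differentiable ℂ (H r) := by
      intro r
      simp only [hH]
      apply Differentiable.sub
      · split
        · exact (hg N).comp (by fun_prop)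
        · exact hK'd _
      · exact (differentiable_id.sub_const c).const_mul c |>.mul (hK'd r)
    refine ⟨H, hHd, ?_⟩
    intro i hi u
    have main : ∑ j ∈ range (N + 1), H j (u + a i) * (a i * u) ^ j
        = g N (u + a i - c)
          + (a i * u - c * (u + a i - c)) * ∑ j ∈ range N, K' j (u + a i) * (a i * u) ^ j := by
      have := alg_id N (g N (u + a i - c)) (fun j => K' j (u + a i)) (hK'N (u + a i))
        (a i * u) (c * (u + a i - c))
      simpa only [hH] using this
    rw [main]
    have hsum : ∑ j ∈ range N, K' j (u + a i) * (a i * u) ^ j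
        = ∑ j ∈ range N, K j (u + a i) * (a i * u) ^ j := by
      apply Finset.sum_congr rfl
      intro j hj
      rw [Finset.mem_range] at hj
      simp [hK', hj]
    rcases Nat.lt_succ_iff_lt_or_eq.mp hi with hi' | hi'
    · rw [hsum, ← hKeq i hi' u]
      have h2 := hfeq i hi' u
      have h3 : a i * u - c * (u + a i - c) = (a i - c) * (u - c) := by ring
      rw [h3, h2]
      simp only [hF]
      ring
    · subst hi'
      have h3 : a i * u - c * (u + a i - c) = 0 := by rw [hc]; ring
      rw [h3, zero_mul, add_zero]
      congr 1
      rw [hc]; ring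


lemma sum_range_even_odd (f : ℕ → ℂ) (n : ℕ) :
    ∑ l ∈ range n, f l
      = (∑ j ∈ range ((n + 1) / 2), f (2 * j)) + ∑ j ∈ range (n / 2), f (2 * j + 1) := by
  induction n with
  | zero => simp
  | succ n ihn =>
    rw [Finset.sum_range_succ, ihn]
    rcases Nat.even_or_odd n with ⟨t, ht⟩ | ⟨t, ht⟩
    · have h1 : (n + 1 + 1) / 2 = t + 1 := by omega
      have h2 : (n + 1) / 2 = t := by omega
      have h3 : n / 2 = t := by omega
      have h4 : (n + 1) / 2 = t := by omega
      rw [h1, h2, h3, Finset.sum_range_succ (fun j => f (2 * j)) t]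
      have h5 : 2 * t = n := by omega
      rw [h5]; ring
    · have h1 : (n + 1 + 1) / 2 = t + 1 := by omega
      have h2 : (n + 1) / 2 = t + 1 := by omega
      have h3 : n / 2 = t := by omega
      have h4 : (n + 1) / 2 = t + 1 := by omega
      rw [h1, h2, h3, Finset.sum_range_succ (fun j => f (2 * j + 1)) t]
      have h5 : 2 * t + 1 = n := by omega
      rw [h5]; ring

lemma uniq (m : ℕ) (d : ℕ → ℂ → ℂ) (hd : ∀ l, Continuous (d l))
    (h0 : ∀ k : ℤ, k.natAbs ≤ m → k % 2 = (m : ℤ) % 2 → ∀ z : ℂ,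
      ∑ l ∈ range (m + 1), d l (z ^ 2 + (k : ℂ) ^ 2) * ((k : ℂ) * z) ^ l = 0) :
    ∀ l, l ≤ m → ∀ w : ℂ, d l w = 0 := by
  classical
  set SF : Finset ℂ := Finset.image (fun p : ℕ × ℕ => ((p.1 : ℂ)) ^ 2 + ((p.2 : ℂ)) ^ 2)
    ((range (m + 1)) ×ˢ (range (m + 1))) with hSF
  have hmemSF : ∀ j j' : ℕ, j ≤ m → j' ≤ m → ((j : ℂ) ^ 2 + (j' : ℂ) ^ 2) ∈ SF := by
    intro j j' hj hj'
    rw [hSF]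
    apply Finset.mem_image.mpr
    exact ⟨(j, j'), by simp [Finset.mem_product, Nat.lt_succ_of_le, hj, hj'], rfl⟩
  have main : ∀ w : ℂ, w ∉ SF → ∀ l, l ≤ m → d l w = 0 := by
    intro w hw l hl
    have hz : ∀ n : ℕ, ∃ z : ℂ, z ^ 2 = w - (n : ℂ) ^ 2 := fun n =>
      IsAlgClosed.exists_pow_nat_eq _ (by norm_num)
    choose zn hzn using hz
    set t : ℤ → ℂ := fun k => (k : ℂ) * zn k.natAbs with ht
    set KZ : Finset ℤ := (Finset.Icc (-(m : ℤ)) m).filter (fun k => k % 2 = (m : ℤ) % 2) with hKZ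
    have himg : KZ = Finset.image (fun i : ℕ => (m : ℤ) - 2 * (i : ℤ)) (range (m + 1)) := by
      ext k
      simp only [hKZ, Finset.mem_filter, Finset.mem_Icc, Finset.mem_image, Finset.mem_range]
      constructor
      · rintro ⟨⟨h1, h2⟩, h3⟩
        exact ⟨((m : ℤ) - k).toNat / 2, by omega, by omega⟩
      · rintro ⟨i, hi, rfl⟩
        omega
    have hKZcard : KZ.card = m + 1 := by
      rw [himg, Finset.card_image_of_injOn (by intro x hx y hy hxy; simp only at hxy; omega), Finset.card_range]
    have hksq : ∀ k : ℤ, ((k : ℂ)) ^ 2 = ((k.natAbs : ℕ) : ℂ) ^ 2 := by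
      intro k
      rw [show ((k.natAbs : ℕ) : ℂ) = ((k.natAbs : ℤ) : ℂ) from (Int.cast_natCast _).symm,
        ← Int.cast_pow, ← Int.cast_pow, Int.natAbs_sq]
    have hzn0 : ∀ n : ℕ, n ≤ m → zn n ≠ 0 := by
      intro n hn h
      apply hw
      have h2 := hzn n
      rw [h, zero_pow (by norm_num)] at h2
      have : w = (n : ℂ) ^ 2 + ((0 : ℕ) : ℂ) ^ 2 := by push_cast; linear_combination -h2
      rw [this]
      exact hmemSF n 0 hn (Nat.zero_le m)
    have htsq : ∀ k : ℤ, (t k) ^ 2 = (k : ℂ) ^ 2 * (w - (k : ℂ) ^ 2) := by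
      intro k
      rw [ht]
      simp only
      rw [mul_pow, hzn k.natAbs, ← hksq]
    have hinj : Set.InjOn t KZ := by
      intro k hk k' hk' heq
      by_contra hne
      rw [hKZ, Finset.coe_filter] at hk hk'
      simp only [Set.mem_setOf_eq, Finset.mem_Icc] at hk hk'
      have hkm : k.natAbs ≤ m := by omega
      have hk'm : k'.natAbs ≤ m := by omega
      by_cases habs : k.natAbs = k'.natAbs
      · have hkk' : k' = -k := by omega
        have hk0 : k ≠ 0 := by omega
        have ht' : t k' = - t k := by
          rw [ht]; simp only
          rw [hkk']
          have h5 : (-k).natAbs = k.natAbs := by omega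
          rw [h5]
          push_cast
          ring
        rw [ht'] at heq
        have h2 : (2 : ℂ) * t k = 0 := by linear_combination heq
        have h3 : t k = 0 := by
          rcases mul_eq_zero.mp h2 with h | h
          · exact absurd h two_ne_zero
          · exact h
        rw [ht] at h3
        simp only at h3
        rcases mul_eq_zero.mp h3 with h | h
        · exact (Int.cast_ne_zero.mpr hk0) h
        · exact hzn0 k.natAbs hkm h
      · have hsq : (t k) ^ 2 = (t k') ^ 2 := by rw [heq]
        rw [htsq, htsq] at hsq
        have hfac : ((k : ℂ) ^ 2 - (k' : ℂ) ^ 2) * (w - ((k : ℂ) ^ 2 + (k' : ℂ) ^ 2)) = 0 := by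
          linear_combination hsq
        have hne2 : (k : ℂ) ^ 2 - (k' : ℂ) ^ 2 ≠ 0 := by
          rw [sub_ne_zero, hksq k, hksq k']
          intro h
          apply habs
          have hnat : (k.natAbs : ℂ) ^ 2 = (k'.natAbs : ℂ) ^ 2 := h
          have : ((k.natAbs ^ 2 : ℕ) : ℂ) = ((k'.natAbs ^ 2 : ℕ) : ℂ) := by push_cast; exact hnat
          have h2 := Nat.cast_injective this
          exact Nat.pow_left_injective (by norm_num) h2
        rcases mul_eq_zero.mp hfac with h | h
        · exact hne2 h
        · apply hw
          have hweq : w = (k.natAbs : ℂ) ^ 2 + (k'.natAbs : ℂ) ^ 2 := by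
            rw [← hksq k, ← hksq k']
            linear_combination h
          rw [hweq]
          exact hmemSF k.natAbs k'.natAbs hkm hk'm
    set p : Polynomial ℂ := ∑ l ∈ range (m + 1), Polynomial.C (d l w) * Polynomial.X ^ l with hp
    have hdeg : p.natDegree ≤ m := by
      rw [hp]
      apply Polynomial.natDegree_sum_le_of_forall_le
      intro l hl'
      apply le_trans (Polynomial.natDegree_C_mul_le _ _)
      rw [Polynomial.natDegree_X_pow]
      exact Nat.lt_succ_iff.mp (Finset.mem_range.mp hl')
    have heval : ∀ s ∈ KZ.image t, p.eval s = 0 := by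
      intro s hs
      obtain ⟨k, hk, rfl⟩ := Finset.mem_image.mp hs
      rw [hKZ, Finset.mem_filter, Finset.mem_Icc] at hk
      have hkm : k.natAbs ≤ m := by omega
      have hpar : k % 2 = (m : ℤ) % 2 := hk.2
      have hval := h0 k hkm hpar (zn k.natAbs)
      have hw2 : (zn k.natAbs) ^ 2 + (k : ℂ) ^ 2 = w := by
        rw [hzn, hksq]; ring
      rw [hw2] at hval
      rw [hp]
      simp only [Polynomial.eval_finset_sum, Polynomial.eval_mul, Polynomial.eval_C,
        Polynomial.eval_pow, Polynomial.eval_X]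
      rw [ht]
      simpa using hval
    have hcard : m < (KZ.image t).card := by
      rw [Finset.card_image_of_injOn hinj, hKZcard]
      omega
    have hp0 : p = 0 :=
      Polynomial.eq_zero_of_natDegree_lt_card_of_eval_eq_zero' p (KZ.image t) heval
        (lt_of_le_of_lt hdeg hcard)
    have hco := congrArg (fun q => Polynomial.coeff q l) hp0
    simp only [hp, Polynomial.finset_sum_coeff, Polynomial.coeff_C_mul, Polynomial.coeff_X_pow,
      Polynomial.coeff_zero, mul_ite, mul_one, mul_zero] at hco
    rw [Finset.sum_ite_eq (range (m + 1)) l (fun j => d j w)] at hco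
    rw [if_pos (Finset.mem_range.mpr (Nat.lt_succ_of_le hl))] at hco
    exact hco
  intro l hl
  have hdense : Dense ((SF : Set ℂ)ᶜ) := (SF.countable_toSet).dense_compl ℂ
  have heq : Set.EqOn (d l) 0 ((SF : Set ℂ)ᶜ) := fun w hw => main w hw l hl
  have hfin := Continuous.ext_on hdense (hd l) continuous_zero heq
  intro w
  exact congrFun hfin w
lemma int_sq_natAbs (k : ℤ) : ((k : ℂ)) ^ 2 = ((k.natAbs : ℕ) : ℂ) ^ 2 := by
  rw [show ((k.natAbs : ℕ) : ℂ) = ((k.natAbs : ℤ) : ℂ) from (Int.cast_natCast _).symm,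
    ← Int.cast_pow, ← Int.cast_pow, Int.natAbs_sq]

/-- the algebra `ₘA_m` is a free `Hol(ℂ)`-module with the `m+1` generators
`(kλ)^l`, `l = 0, …, m`: every symmetric tuple `(φ_k)` of entire functions (indexed by
the integers `k` with `|k| ≤ m`, `k ≡ m (mod 2)`) satisfying `φ_k(λ) = φ_{-k}(-λ)` and
`φ_k(l) = φ_l(k)` admits a unique representation
`φ_k(λ) = Σ_{l=0}^{m} h_l(λ² + k²)·(kλ)^l` with `h_0, …, h_m` entire. -/
theorem stmt_6 (m : ℕ) (φ : ℤ → ℂ → ℂ)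
    (hdiff : ∀ k : ℤ, k.natAbs ≤ m → k % 2 = (m : ℤ) % 2 → Differentiable ℂ (φ k))
    (hsym : ∀ k : ℤ, k.natAbs ≤ m → k % 2 = (m : ℤ) % 2 → ∀ z : ℂ, φ k z = φ (-k) (-z))
    (hint : ∀ k l : ℤ, k.natAbs ≤ m → l.natAbs ≤ m →
      k % 2 = (m : ℤ) % 2 → l % 2 = (m : ℤ) % 2 → φ k (l : ℂ) = φ l (k : ℂ)) :
    ∃! h : Fin (m + 1) → ℂ → ℂ,
      (∀ l : Fin (m + 1), Differentiable ℂ (h l)) ∧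
      ∀ k : ℤ, k.natAbs ≤ m → k % 2 = (m : ℤ) % 2 → ∀ z : ℂ,
        φ k z = ∑ l : Fin (m + 1), h l (z ^ 2 + (k : ℂ) ^ 2) * ((k : ℂ) * z) ^ (l : ℕ) := by
  classical
  set e : ℤ → ℂ → ℂ := fun k z => (φ k z + φ k (-z)) / 2 with he
  set o : ℤ → ℂ → ℂ := fun k z => (φ k z - φ k (-z)) / 2 with ho
  have hφneg : ∀ k : ℤ, k.natAbs ≤ m → k % 2 = (m : ℤ) % 2 → ∀ z : ℂ,
      φ (-k) z = φ k (-z) := by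
    intro k hk hp z
    have h := hsym k hk hp (-z)
    rw [neg_neg] at h
    exact h.symm
  have hparneg : ∀ k : ℤ, k % 2 = (m : ℤ) % 2 → (-k) % 2 = (m : ℤ) % 2 := by
    intro k h; omega
  have hed : ∀ k : ℤ, k.natAbs ≤ m → k % 2 = (m : ℤ) % 2 → Differentiable ℂ (e k) := by
    intro k hk hp
    have h1 : Differentiable ℂ (fun z => φ k (-z)) := (hdiff k hk hp).comp differentiable_neg
    exact ((hdiff k hk hp).add h1).div_const 2
  have hod : ∀ k : ℤ, k.natAbs ≤ m → k % 2 = (m : ℤ) % 2 → Differentiable ℂ (o k) := by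
    intro k hk hp
    have h1 : Differentiable ℂ (fun z => φ k (-z)) := (hdiff k hk hp).comp differentiable_neg
    exact ((hdiff k hk hp).sub h1).div_const 2
  have heeven : ∀ k : ℤ, ∀ z : ℂ, e k (-z) = e k z := by
    intro k z; simp only [he, neg_neg]; ring
  have hoodd : ∀ k : ℤ, ∀ z : ℂ, o k (-z) = - o k z := by
    intro k z; simp only [ho, neg_neg]; ring
  have heneg : ∀ k : ℤ, k.natAbs ≤ m → k % 2 = (m : ℤ) % 2 → ∀ z : ℂ, e (-k) z = e k z := by
    intro k hk hp z
    simp only [he]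
    rw [hφneg k hk hp z, hφneg k hk hp (-z), neg_neg]
    ring
  have honeg : ∀ k : ℤ, k.natAbs ≤ m → k % 2 = (m : ℤ) % 2 → ∀ z : ℂ, o (-k) z = - o k z := by
    intro k hk hp z
    simp only [ho]
    rw [hφneg k hk hp z, hφneg k hk hp (-z), neg_neg]
    ring
  have hesym : ∀ k l : ℤ, k.natAbs ≤ m → l.natAbs ≤ m → k % 2 = (m : ℤ) % 2 →
      l % 2 = (m : ℤ) % 2 → e k (l : ℂ) = e l (k : ℂ) := by
    intro k l hk hl hpk hpl
    simp only [he]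
    have h1 : φ k (-(l : ℂ)) = φ (-k) (l : ℂ) := (hφneg k hk hpk (l : ℂ)).symm
    have h2 : φ (-k) ((l : ℤ) : ℂ) = φ l ((-k : ℤ) : ℂ) := by
      apply hint (-k) l (by omega) hl (hparneg k hpk) hpl
    rw [h1]
    rw [show ((l : ℤ) : ℂ) = (l : ℂ) from rfl] at h2
    rw [h2, hint k l hk hl hpk hpl]
    push_cast
    ring_nf
  have hosym : ∀ k l : ℤ, k.natAbs ≤ m → l.natAbs ≤ m → k % 2 = (m : ℤ) % 2 →
      l % 2 = (m : ℤ) % 2 → o k (l : ℂ) = o l (k : ℂ) := by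
    intro k l hk hl hpk hpl
    simp only [ho]
    have h1 : φ k (-(l : ℂ)) = φ (-k) (l : ℂ) := (hφneg k hk hpk (l : ℂ)).symm
    have h2 : φ (-k) ((l : ℤ) : ℂ) = φ l ((-k : ℤ) : ℂ) := by
      apply hint (-k) l (by omega) hl (hparneg k hpk) hpl
    rw [h1]
    rw [show ((l : ℤ) : ℂ) = (l : ℂ) from rfl] at h2
    rw [h2, hint k l hk hl hpk hpl]
    push_cast
    ring_nf
  set Ne := m / 2 + 1 with hNe
  set No := (m + 1) / 2 with hNo
  set nodes : ℕ → ℕ := fun i => m - 2 * i with hnodes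
  -- ===================== EVEN PART =====================
  have hEex : ∀ i : ℕ, ∃ g : ℂ → ℂ, Differentiable ℂ g ∧
      (i < Ne → ∀ z : ℂ, e ((nodes i : ℕ) : ℤ) z = g (z ^ 2)) := by
    intro i
    by_cases hi : i < Ne
    · have hna : ((nodes i : ℕ) : ℤ).natAbs ≤ m := by
        rw [Int.natAbs_natCast]; simp only [hnodes]; omega
      have hpar : ((nodes i : ℕ) : ℤ) % 2 = (m : ℤ) % 2 := by
        simp only [hnodes, hNe] at hi ⊢; omega
      obtain ⟨g, hg, hge⟩ := even_rep (hed _ hna hpar) (heeven _)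
      exact ⟨g, hg, fun _ => hge⟩
    · exact ⟨fun _ => 0, differentiable_const 0, fun h => absurd h hi⟩
  choose gE hgEd hgEe using hEex
  have hinjE : ∀ i, i < Ne → ∀ j, j < Ne → i ≠ j →
      ((nodes i : ℕ) : ℂ) ^ 2 ≠ ((nodes j : ℕ) : ℂ) ^ 2 := by
    intro i hi j hj hij h
    apply hij
    have h2 : (((nodes i) ^ 2 : ℕ) : ℂ) = (((nodes j) ^ 2 : ℕ) : ℂ) := by push_cast; exact h
    have h3 : (nodes i) ^ 2 = (nodes j) ^ 2 := Nat.cast_injective h2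
    have h4 : nodes i = nodes j := Nat.pow_left_injective (by norm_num) h3
    simp only [hnodes, hNe] at h4 hi hj
    omega
  have hsymE : ∀ i, i < Ne → ∀ j, j < Ne →
      gE i (((nodes j : ℕ) : ℂ) ^ 2) = gE j (((nodes i : ℕ) : ℂ) ^ 2) := by
    intro i hi j hj
    have h1 := hgEe i hi ((nodes j : ℕ) : ℂ)
    have h2 := hgEe j hj ((nodes i : ℕ) : ℂ)
    rw [← h1, ← h2]
    have hnai : ((nodes i : ℕ) : ℤ).natAbs ≤ m := by
      rw [Int.natAbs_natCast]; simp only [hnodes]; omega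
    have hnaj : ((nodes j : ℕ) : ℤ).natAbs ≤ m := by
      rw [Int.natAbs_natCast]; simp only [hnodes]; omega
    have hpi : ((nodes i : ℕ) : ℤ) % 2 = (m : ℤ) % 2 := by
      simp only [hnodes, hNe] at hi ⊢; omega
    have hpj : ((nodes j : ℕ) : ℤ) % 2 = (m : ℤ) % 2 := by
      simp only [hnodes, hNe] at hj ⊢; omega
    have := hesym ((nodes i : ℕ) : ℤ) ((nodes j : ℕ) : ℤ) hnai hnaj hpi hpj
    push_cast at this ⊢
    exact this
  obtain ⟨HE, hHEd, hHEeq⟩ := key Ne (fun i => ((nodes i : ℕ) : ℂ) ^ 2) gE hgEd hinjE hsymE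
  have hEk : ∀ k : ℤ, k.natAbs ≤ m → k % 2 = (m : ℤ) % 2 → ∀ z : ℂ,
      e k z = ∑ j ∈ range Ne, HE j (z ^ 2 + (k : ℂ) ^ 2) * ((k : ℂ) * z) ^ (2 * j) := by
    intro k hk hpar z
    set i := (m - k.natAbs) / 2 with hi
    have hiN : i < Ne := by simp only [hi, hNe]; omega
    have hnode : nodes i = k.natAbs := by simp only [hnodes, hi]; omega
    have h1 : e k z = e ((k.natAbs : ℕ) : ℤ) z := by
      rcases Int.natAbs_eq k with h | h
      · conv_lhs => rw [h]
      · conv_lhs => rw [h]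
        exact heneg ((k.natAbs : ℕ) : ℤ) (by rwa [Int.natAbs_natCast]) (by omega) z
    have h2 := hgEe i hiN z
    rw [hnode] at h2
    have h3 := hHEeq i hiN (z ^ 2)
    rw [hnode] at h3
    rw [h1, h2, h3]
    apply Finset.sum_congr rfl
    intro j _
    have hpow : ((k : ℂ) * z) ^ (2 * j) = (((k.natAbs : ℕ) : ℂ) ^ 2 * z ^ 2) ^ j := by
      rw [pow_mul, mul_pow, int_sq_natAbs k]
    rw [hpow, int_sq_natAbs k]
  -- ===================== ODD PART =====================
  have hOex : ∀ i : ℕ, ∃ g : ℂ → ℂ, Differentiable ℂ g ∧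
      (i < No → ∀ z : ℂ, o ((nodes i : ℕ) : ℤ) z = ((nodes i : ℕ) : ℂ) * z * g (z ^ 2)) := by
    intro i
    by_cases hi : i < No
    · have hn1 : 1 ≤ nodes i := by simp only [hnodes, hNo] at hi ⊢; omega
      have hna : ((nodes i : ℕ) : ℤ).natAbs ≤ m := by
        rw [Int.natAbs_natCast]; simp only [hnodes]; omega
      have hpar : ((nodes i : ℕ) : ℤ) % 2 = (m : ℤ) % 2 := by
        simp only [hnodes, hNo] at hi ⊢; omega
      obtain ⟨q, hq, hqe⟩ := odd_rep (hod _ hna hpar) (hoodd _)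
      have hn0 : ((nodes i : ℕ) : ℂ) ≠ 0 := by
        simp only [ne_eq, Nat.cast_eq_zero]; omega
      refine ⟨fun u => (((nodes i : ℕ) : ℂ))⁻¹ * q u, hq.const_mul _, fun _ z => ?_⟩
      rw [hqe z]
      field_simp
    · exact ⟨fun _ => 0, differentiable_const 0, fun h => absurd h hi⟩
  choose gO hgOd hgOe using hOex
  have hinjO : ∀ i, i < No → ∀ j, j < No → i ≠ j →
      ((nodes i : ℕ) : ℂ) ^ 2 ≠ ((nodes j : ℕ) : ℂ) ^ 2 := by
    intro i hi j hj hij h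
    apply hij
    have h2 : (((nodes i) ^ 2 : ℕ) : ℂ) = (((nodes j) ^ 2 : ℕ) : ℂ) := by push_cast; exact h
    have h3 : (nodes i) ^ 2 = (nodes j) ^ 2 := Nat.cast_injective h2
    have h4 : nodes i = nodes j := Nat.pow_left_injective (by norm_num) h3
    simp only [hnodes, hNo] at h4 hi hj
    omega
  have hsymO : ∀ i, i < No → ∀ j, j < No →
      gO i (((nodes j : ℕ) : ℂ) ^ 2) = gO j (((nodes i : ℕ) : ℂ) ^ 2) := by
    intro i hi j hj
    have h1 := hgOe i hi ((nodes j : ℕ) : ℂ)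
    have h2 := hgOe j hj ((nodes i : ℕ) : ℂ)
    have hnai : ((nodes i : ℕ) : ℤ).natAbs ≤ m := by
      rw [Int.natAbs_natCast]; simp only [hnodes]; omega
    have hnaj : ((nodes j : ℕ) : ℤ).natAbs ≤ m := by
      rw [Int.natAbs_natCast]; simp only [hnodes]; omega
    have hpi : ((nodes i : ℕ) : ℤ) % 2 = (m : ℤ) % 2 := by
      simp only [hnodes, hNo] at hi ⊢; omega
    have hpj : ((nodes j : ℕ) : ℤ) % 2 = (m : ℤ) % 2 := by
      simp only [hnodes, hNo] at hj ⊢; omega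
    have hsymval := hosym ((nodes i : ℕ) : ℤ) ((nodes j : ℕ) : ℤ) hnai hnaj hpi hpj
    push_cast at hsymval
    rw [h1, h2] at hsymval
    have hni : ((nodes i : ℕ) : ℂ) ≠ 0 := by
      simp only [ne_eq, Nat.cast_eq_zero]
      simp only [hnodes, hNo] at hi ⊢; omega
    have hnj : ((nodes j : ℕ) : ℂ) ≠ 0 := by
      simp only [ne_eq, Nat.cast_eq_zero]
      simp only [hnodes, hNo] at hj ⊢; omega
    have h3 : ((nodes i : ℕ) : ℂ) * (((nodes j : ℕ) : ℂ) * gO i (((nodes j : ℕ) : ℂ) ^ 2))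
        = ((nodes i : ℕ) : ℂ) * (((nodes j : ℕ) : ℂ) * gO j (((nodes i : ℕ) : ℂ) ^ 2)) := by
      linear_combination hsymval
    exact mul_left_cancel₀ hnj (mul_left_cancel₀ hni h3)
  obtain ⟨HO, hHOd, hHOeq⟩ := key No (fun i => ((nodes i : ℕ) : ℂ) ^ 2) gO hgOd hinjO hsymO
  have hOk : ∀ k : ℤ, k.natAbs ≤ m → k % 2 = (m : ℤ) % 2 → ∀ z : ℂ,
      o k z = ∑ j ∈ range No, HO j (z ^ 2 + (k : ℂ) ^ 2) * ((k : ℂ) * z) ^ (2 * j + 1) := by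
    intro k hk hpar z
    by_cases hk0 : k = 0
    · subst hk0
      have h1 : o 0 z = 0 := by
        simp only [ho]
        have h := hφneg 0 (by simp) (by omega) z
        rw [neg_zero] at h
        rw [← h]
        ring
      rw [h1]
      symm
      apply Finset.sum_eq_zero
      intro j _
      rw [Int.cast_zero, zero_mul, zero_pow (by omega : 2 * j + 1 ≠ 0), mul_zero]
    · have hk1 : 1 ≤ k.natAbs := by omega
      set i := (m - k.natAbs) / 2 with hi
      have hiN : i < No := by simp only [hi, hNo]; omega
      have hnode : nodes i = k.natAbs := by simp only [hnodes, hi]; omega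
      have hnat : o ((k.natAbs : ℕ) : ℤ) z
          = ∑ j ∈ range No, HO j (z ^ 2 + ((k.natAbs : ℕ) : ℂ) ^ 2)
              * (((k.natAbs : ℕ) : ℂ) * z) ^ (2 * j + 1) := by
        have h2 := hgOe i hiN z
        rw [hnode] at h2
        have h3 := hHOeq i hiN (z ^ 2)
        rw [hnode] at h3
        rw [h2, h3, Finset.mul_sum]
        apply Finset.sum_congr rfl
        intro j _
        have hpow : (((k.natAbs : ℕ) : ℂ) * z) ^ (2 * j + 1)
            = (((k.natAbs : ℕ) : ℂ) ^ 2 * z ^ 2) ^ j * (((k.natAbs : ℕ) : ℂ) * z) := by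
          rw [pow_succ, pow_mul, mul_pow]
        rw [hpow]
        ring
      rcases Int.natAbs_eq k with h | h
      · have hcast : (k : ℂ) = ((k.natAbs : ℕ) : ℂ) := by
          conv_lhs => rw [h]
          exact Int.cast_natCast _
        conv_lhs => rw [h]
        rw [hnat, hcast]
      · have hcast : (k : ℂ) = -((k.natAbs : ℕ) : ℂ) := by
          conv_lhs => rw [h]
          rw [Int.cast_neg, Int.cast_natCast]
        have h4 : o k z = - o ((k.natAbs : ℕ) : ℤ) z := by
          conv_lhs => rw [h]
          exact honeg ((k.natAbs : ℕ) : ℤ) (by rwa [Int.natAbs_natCast]) (by omega) z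
        rw [h4, hnat, hcast]
        have hterm : ∀ j ∈ range No,
            HO j (z ^ 2 + (-((k.natAbs : ℕ) : ℂ)) ^ 2) * ((-((k.natAbs : ℕ) : ℂ)) * z) ^ (2 * j + 1)
            = -(HO j (z ^ 2 + ((k.natAbs : ℕ) : ℂ) ^ 2)
                * (((k.natAbs : ℕ) : ℂ) * z) ^ (2 * j + 1)) := by
          intro j _
          have hodd : Odd (2 * j + 1) := ⟨j, by ring⟩
          rw [neg_sq, show (-((k.natAbs : ℕ) : ℂ)) * z = -(((k.natAbs : ℕ) : ℂ) * z) from by ring,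
            hodd.neg_pow]
          ring
        rw [Finset.sum_congr rfl hterm, ← Finset.sum_neg_distrib]
  -- ===================== ASSEMBLY =====================
  set hN : ℕ → ℂ → ℂ := fun l => if l % 2 = 0 then HE (l / 2) else HO (l / 2) with hhN
  have hhNd : ∀ l, Differentiable ℂ (hN l) := by
    intro l
    simp only [hhN]
    split
    · exact hHEd _
    · exact hHOd _
  have hmain : ∀ k : ℤ, k.natAbs ≤ m → k % 2 = (m : ℤ) % 2 → ∀ z : ℂ,
      φ k z = ∑ l ∈ range (m + 1), hN l (z ^ 2 + (k : ℂ) ^ 2) * ((k : ℂ) * z) ^ l := by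
    intro k hk hpar z
    rw [sum_range_even_odd (fun l => hN l (z ^ 2 + (k : ℂ) ^ 2) * ((k : ℂ) * z) ^ l) (m + 1)]
    have hc1 : (m + 1 + 1) / 2 = Ne := by rw [hNe]; omega
    have hc2 : (m + 1) / 2 = No := hNo.symm
    rw [hc1, hc2]
    have hev : ∀ j ∈ range Ne, hN (2 * j) (z ^ 2 + (k : ℂ) ^ 2) * ((k : ℂ) * z) ^ (2 * j)
        = HE j (z ^ 2 + (k : ℂ) ^ 2) * ((k : ℂ) * z) ^ (2 * j) := by
      intro j _
      simp only [hhN]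
      rw [if_pos (by omega : (2 * j) % 2 = 0)]
      congr 2
      omega
    have hov : ∀ j ∈ range No, hN (2 * j + 1) (z ^ 2 + (k : ℂ) ^ 2) * ((k : ℂ) * z) ^ (2 * j + 1)
        = HO j (z ^ 2 + (k : ℂ) ^ 2) * ((k : ℂ) * z) ^ (2 * j + 1) := by
      intro j _
      simp only [hhN]
      rw [if_neg (by omega : ¬(2 * j + 1) % 2 = 0)]
      congr 2
      omega
    rw [Finset.sum_congr rfl hev, Finset.sum_congr rfl hov]
    rw [← hEk k hk hpar z, ← hOk k hk hpar z]
    simp only [he, ho]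
    ring
  refine ⟨fun l : Fin (m + 1) => hN (l : ℕ), ⟨fun l => hhNd _, ?_⟩, ?_⟩
  · intro k hk hpar z
    rw [hmain k hk hpar z]
    rw [Fin.sum_univ_eq_sum_range (fun l => hN l (z ^ 2 + (k : ℂ) ^ 2) * ((k : ℂ) * z) ^ l) (m + 1)]
  · -- uniqueness
    rintro h' ⟨h'd, h'eq⟩
    set d : ℕ → ℂ → ℂ := fun l => if hl : l < m + 1
      then (fun w => h' ⟨l, hl⟩ w - hN l w) else (fun _ => 0) with hd
    have hdc : ∀ l, Continuous (d l) := by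
      intro l
      simp only [hd]
      split
      · exact ((h'd _).continuous).sub (hhNd l).continuous
      · exact continuous_const
    have hdsum : ∀ k : ℤ, k.natAbs ≤ m → k % 2 = (m : ℤ) % 2 → ∀ z : ℂ,
        ∑ l ∈ range (m + 1), d l (z ^ 2 + (k : ℂ) ^ 2) * ((k : ℂ) * z) ^ l = 0 := by
      intro k hk hpar z
      rw [← Fin.sum_univ_eq_sum_range (fun l => d l (z ^ 2 + (k : ℂ) ^ 2) * ((k : ℂ) * z) ^ l)
        (m + 1)]
      have hterm : ∀ l : Fin (m + 1),
          d (l : ℕ) (z ^ 2 + (k : ℂ) ^ 2) * ((k : ℂ) * z) ^ (l : ℕ)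
          = h' l (z ^ 2 + (k : ℂ) ^ 2) * ((k : ℂ) * z) ^ (l : ℕ)
            - hN (l : ℕ) (z ^ 2 + (k : ℂ) ^ 2) * ((k : ℂ) * z) ^ (l : ℕ) := by
        intro l
        simp only [hd, dif_pos l.isLt, Fin.eta]
        ring
      rw [Finset.sum_congr rfl (fun l _ => hterm l), Finset.sum_sub_distrib]
      rw [← h'eq k hk hpar z]
      rw [Fin.sum_univ_eq_sum_range (fun l => hN l (z ^ 2 + (k : ℂ) ^ 2) * ((k : ℂ) * z) ^ l)
        (m + 1)]
      rw [← hmain k hk hpar z]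
      ring
    have hz := uniq m d hdc hdsum
    funext l
    have hl := l.isLt
    have := hz (l : ℕ) (by omega)
    funext w
    have h5 := this w
    simp only [hd, dif_pos l.isLt, Fin.eta] at h5
    exact sub_eq_zero.mp h5
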